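/- For n ≥ 4, the largest adjacency eigenvalue of the signed graph Ġ^{1, n−3} equals (√(n² − 8) + n − 4)/2. -/

import Mathlib

set_option maxHeartbeats 1000000


/-- The sign matrix of the signed graph `Ġ^{s,t}` on `s + t + 2` vertices:
vertex `0 = u`, vertex `1 = v`, vertices `2, …, s+1` are `u₁, …, u_s`, and vertices
`s+2, …, s+t+1` are `v₁, …, v_t`. -/
def gstSign (s t : ℕ) (x y : Fin (s + t + 2)) : ℤ :=
  if x = y then 0
  else
    if min x.val y.val = 0 ∧ max x.val y.val = 1 then -1
    else if min x.val y.val = 0 then (if max x.val y.val < s + 2 then 1 else 0)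
    else if min x.val y.val = 1 then (if s + 2 ≤ max x.val y.val then 1 else 0)
    else 1

/-- The adjacency matrix of the signed graph `Ġ^{s,t}`, as a real matrix. -/
def gstMat (s t : ℕ) : Matrix (Fin (s + t + 2)) (Fin (s + t + 2)) ℝ :=
  Matrix.of fun x y => (gstSign s t x y : ℝ)

/-- The largest (real) eigenvalue `λ₁` of a real matrix. -/
noncomputable def lam1 {V : Type*} [Fintype V] (A : Matrix V V ℝ) : ℝ :=
  sSup {μ : ℝ | ∃ x : V → ℝ, x ≠ 0 ∧ A.mulVec x = μ • x}

/-!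
STATEMENT 7: For n ≥ 4, the largest adjacency eigenvalue of the signed graph `Ġ^{1, n−3}`
equals (√(n² − 8) + n − 4)/2.
-/
noncomputable def Ssum (t : ℕ) (x : Fin (1 + t + 2) → ℝ) : ℝ :=
  ∑ j, if 3 ≤ j.val then x j else 0

variable {t : ℕ}

lemma row0 (x : Fin (1 + t + 2) → ℝ) :
    (gstMat 1 t).mulVec x ⟨0, by omega⟩ =
      - x ⟨1, by omega⟩ + x ⟨2, by omega⟩ := by
  rw [Matrix.mulVec, dotProduct]
  have : ∀ j : Fin (1 + t + 2), gstMat 1 t ⟨0, by omega⟩ j * x j =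
      (if j = ⟨1, by omega⟩ then - x j else 0) + (if j = ⟨2, by omega⟩ then x j else 0) := by
    intro j
    simp only [gstMat, Matrix.of_apply, gstSign, Fin.ext_iff]
    split_ifs <;> first | omega | (push_cast; ring)
  rw [Finset.sum_congr rfl (fun j _ => this j)]
  rw [Finset.sum_add_distrib]
  simp only [Finset.sum_ite_eq', Finset.mem_univ, if_true]

lemma row1 (x : Fin (1 + t + 2) → ℝ) :
    (gstMat 1 t).mulVec x ⟨1, by omega⟩ = - x ⟨0, by omega⟩ + Ssum t x := by
  rw [Matrix.mulVec, dotProduct, Ssum]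
  have : ∀ j : Fin (1 + t + 2), gstMat 1 t ⟨1, by omega⟩ j * x j =
      (if j = ⟨0, by omega⟩ then - x j else 0) + (if 3 ≤ j.val then x j else 0) := by
    intro j
    simp only [gstMat, Matrix.of_apply, gstSign, Fin.ext_iff]
    split_ifs <;> first | omega | (push_cast; ring)
  rw [Finset.sum_congr rfl (fun j _ => this j), Finset.sum_add_distrib]
  simp only [Finset.sum_ite_eq', Finset.mem_univ, if_true]

lemma row2 (x : Fin (1 + t + 2) → ℝ) :
    (gstMat 1 t).mulVec x ⟨2, by omega⟩ = x ⟨0, by omega⟩ + Ssum t x := by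
  rw [Matrix.mulVec, dotProduct, Ssum]
  have : ∀ j : Fin (1 + t + 2), gstMat 1 t ⟨2, by omega⟩ j * x j =
      (if j = ⟨0, by omega⟩ then x j else 0) + (if 3 ≤ j.val then x j else 0) := by
    intro j
    simp only [gstMat, Matrix.of_apply, gstSign, Fin.ext_iff]
    split_ifs <;> first | omega | (push_cast; ring)
  rw [Finset.sum_congr rfl (fun j _ => this j), Finset.sum_add_distrib]
  simp only [Finset.sum_ite_eq', Finset.mem_univ, if_true]

lemma rowj (x : Fin (1 + t + 2) → ℝ) (i : Fin (1 + t + 2)) (hi : 3 ≤ i.val) :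
    (gstMat 1 t).mulVec x i =
      x ⟨1, by omega⟩ + x ⟨2, by omega⟩ + (Ssum t x - x i) := by
  rw [Matrix.mulVec, dotProduct, Ssum]
  have : ∀ j : Fin (1 + t + 2), gstMat 1 t i j * x j =
      (if j = ⟨1, by omega⟩ then x j else 0) + (if j = ⟨2, by omega⟩ then x j else 0)
        + ((if 3 ≤ j.val then x j else 0) - (if j = i then x j else 0)) := by
    intro j
    simp only [gstMat, Matrix.of_apply, gstSign, Fin.ext_iff]
    split_ifs <;> first | omega | (push_cast; ring)
  rw [Finset.sum_congr rfl (fun j _ => this j), Finset.sum_add_distrib,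
    Finset.sum_add_distrib, Finset.sum_sub_distrib]
  simp only [Finset.sum_ite_eq', Finset.mem_univ, if_true]

lemma sum_range_ite (d : ℝ) (N : ℕ) :
    ∑ k ∈ Finset.range (N + 3), (if 3 ≤ k then d else 0) = N * d := by
  induction N with
  | zero => norm_num [Finset.sum_range_succ]
  | succ N ih =>
      rw [show N + 1 + 3 = (N + 3) + 1 from rfl, Finset.sum_range_succ, ih,
        if_pos (by omega)]
      push_cast; ring

lemma Ssum_const (x : Fin (1 + t + 2) → ℝ) (d : ℝ)
    (h : ∀ j : Fin (1 + t + 2), 3 ≤ j.val → x j = d) : Ssum t x = t * d := by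
  rw [Ssum]
  have e : ∀ j : Fin (1 + t + 2), (if 3 ≤ j.val then x j else 0)
      = (if 3 ≤ j.val then d else 0) := by
    intro j; split_ifs with hj
    · exact h j hj
    · rfl
  rw [Finset.sum_congr rfl (fun j _ => e j),
    Fin.sum_univ_eq_sum_range (fun k => if 3 ≤ k then d else 0),
    show 1 + t + 2 = t + 3 by ring, sum_range_ite]

theorem lam1_gst_one (n : ℕ) (hn : 4 ≤ n) :
    lam1 (gstMat 1 (n - 3)) = (Real.sqrt ((n : ℝ) ^ 2 - 8) + n - 4) / 2 := by
  set t : ℕ := n - 3 with ht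
  have htn : (t : ℝ) = (n : ℝ) - 3 := by
    rw [ht]; push_cast [Nat.cast_sub (by omega : 3 ≤ n)]; ring
  have ht1 : 1 ≤ t := by omega
  set q : ℝ := Real.sqrt ((n : ℝ) ^ 2 - 8) with hqdef
  have hn4 : (4 : ℝ) ≤ (n : ℝ) := by exact_mod_cast hn
  have hq0 : 0 ≤ q := Real.sqrt_nonneg _
  have hq2 : q ^ 2 = (n : ℝ) ^ 2 - 8 := Real.sq_sqrt (by nlinarith)
  set μ : ℝ := (q + n - 4) / 2 with hμdef
  have hquad : μ ^ 2 = ((n : ℝ) - 4) * μ + 2 * ((n : ℝ) - 3) := by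
    rw [hμdef]; linear_combination hq2 / 4
  have hqgt : (n : ℝ) - 4 < q := by nlinarith
  have hμsqrt2 : Real.sqrt 2 ≤ μ := by
    have h8 : Real.sqrt 8 ≤ q := Real.sqrt_le_sqrt (by nlinarith)
    have h82 : Real.sqrt 8 = 2 * Real.sqrt 2 := by
      rw [show (8 : ℝ) = 2 ^ 2 * 2 by norm_num, Real.sqrt_mul (by positivity),
        Real.sqrt_sq (by norm_num)]
    rw [hμdef]; rw [h82] at h8; linarith
  have hsqrt2 : (0:ℝ) ≤ Real.sqrt 2 := Real.sqrt_nonneg 2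
  -- upper bound
  have hub : ∀ ν ∈ {ν : ℝ | ∃ x : Fin (1 + t + 2) → ℝ, x ≠ 0 ∧
      (gstMat 1 t).mulVec x = ν • x}, ν ≤ μ := by
    rintro ν ⟨x, hx0, hxev⟩
    set a := x ⟨0, by omega⟩ with ha
    set b := x ⟨1, by omega⟩ with hb
    set c := x ⟨2, by omega⟩ with hc
    set S := Ssum t x with hS
    have E0 : - b + c = ν * a := by
      have := congrFun hxev ⟨0, by omega⟩
      rwa [row0, Pi.smul_apply, smul_eq_mul] at this
    have E1 : - a + S = ν * b := by
      have := congrFun hxev ⟨1, by omega⟩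
      rwa [row1, Pi.smul_apply, smul_eq_mul] at this
    have E2 : a + S = ν * c := by
      have := congrFun hxev ⟨2, by omega⟩
      rwa [row2, Pi.smul_apply, smul_eq_mul] at this
    have Ej : ∀ i : Fin (1 + t + 2), 3 ≤ i.val → b + c + (S - x i) = ν * x i := by
      intro i hi
      have := congrFun hxev i
      rwa [rowj x i hi, Pi.smul_apply, smul_eq_mul] at this
    by_cases hν1 : ν = -1
    · rw [hν1]; linarith
    · have hν1' : ν + 1 ≠ 0 := by intro h; apply hν1; linarith
      set d : ℝ := (b + c + S) / (ν + 1) with hd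
      have hxd : ∀ i : Fin (1 + t + 2), 3 ≤ i.val → x i = d := by
        intro i hi
        have := Ej i hi
        rw [hd]; field_simp; linarith
      have hSd : S = t * d := Ssum_const x d hxd
      have F : b + c + ((t:ℝ) * d - d) = ν * d := by
        have h3 : (3 : ℕ) < 1 + t + 2 := by omega
        have := Ej ⟨3, h3⟩ (by simp)
        rwa [hxd ⟨3, h3⟩ (by simp), hSd] at this
      have hda : (ν ^ 2 - 2) * a = 0 := by linear_combination (-ν) * E0 - E2 + E1
      have hdd : (ν ^ 2 - ((t:ℝ) - 1) * ν - 2 * t) * d = 0 := by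
        linear_combination (-ν) * F - E1 - E2 + 2 * hSd
      rcases mul_eq_zero.mp hdd with hq' | hd0
      · -- quadratic case
        have hν2 : ν ^ 2 = ((n:ℝ) - 4) * ν + 2 * ((n:ℝ) - 3) := by
          rw [htn] at hq'; linear_combination hq'
        by_contra hlt
        push_neg at hlt
        nlinarith [mul_pos (sub_pos.mpr hlt) (show 0 < ν + μ - ((n:ℝ) - 4) by nlinarith)]
      · -- d = 0
        have hS0 : S = 0 := by rw [hSd, hd0]; ring
        have hcb : c = - b := by
          rw [hd0] at F; rw [hS0] at *; linarith [F]
        have hb2 : (ν ^ 2 - 2) * b = 0 := by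
          rw [hS0] at E1 E2
          linear_combination (-ν) * E1 + E0 - hcb
        rcases mul_eq_zero.mp hb2 with hq' | hb0
        · have : ν ≤ Real.sqrt 2 := by
            nlinarith [Real.sq_sqrt (by norm_num : (0:ℝ) ≤ 2), Real.sqrt_nonneg 2]
          linarith
        · exfalso; apply hx0
          have ha0 : a = 0 := by rw [hS0, hb0] at E1; linarith
          have hc0 : c = 0 := by rw [hcb, hb0]; ring
          funext i
          have : i.val = 0 ∨ i.val = 1 ∨ i.val = 2 ∨ 3 ≤ i.val := by omega
          rcases this with h | h | h | h
          · have : i = ⟨0, by omega⟩ := Fin.ext h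
            rw [this]; exact ha0
          · have : i = ⟨1, by omega⟩ := Fin.ext h
            rw [this]; exact hb0
          · have : i = ⟨2, by omega⟩ := Fin.ext h
            rw [this]; exact hc0
          · rw [hxd i h, hd0]; rfl
  -- membership
  have hmem : μ ∈ {ν : ℝ | ∃ x : Fin (1 + t + 2) → ℝ, x ≠ 0 ∧
      (gstMat 1 t).mulVec x = ν • x} := by
    refine ⟨fun i => if i.val = 1 ∨ i.val = 2 then (n : ℝ) - 3
      else if 3 ≤ i.val then μ else 0, ?_, ?_⟩
    · intro h
      have := congrFun h ⟨1, by omega⟩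
      simp at this
      linarith
    · set x : Fin (1 + t + 2) → ℝ := fun i => if i.val = 1 ∨ i.val = 2 then (n : ℝ) - 3
        else if 3 ≤ i.val then μ else 0 with hx
      have hx0 : x ⟨0, by omega⟩ = 0 := by simp [hx]
      have hx1 : x ⟨1, by omega⟩ = (n : ℝ) - 3 := by simp [hx]
      have hx2 : x ⟨2, by omega⟩ = (n : ℝ) - 3 := by simp [hx]
      have hxj : ∀ i : Fin (1 + t + 2), 3 ≤ i.val → x i = μ := by
        intro i hi; simp only [hx]
        rw [if_neg (by omega), if_pos hi]
      have hSx : Ssum t x = t * μ := Ssum_const x μ hxj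
      funext i
      rw [Pi.smul_apply, smul_eq_mul]
      have : i.val = 0 ∨ i.val = 1 ∨ i.val = 2 ∨ 3 ≤ i.val := by omega
      rcases this with h | h | h | h
      · have hi : i = ⟨0, by omega⟩ := Fin.ext h
        rw [hi, row0, hx0, hx1, hx2]; ring
      · have hi : i = ⟨1, by omega⟩ := Fin.ext h
        rw [hi, row1, hx0, hx1, hSx, htn]; ring
      · have hi : i = ⟨2, by omega⟩ := Fin.ext h
        rw [hi, row2, hx0, hx2, hSx, htn]; ring
      · rw [rowj x i h, hx1, hx2, hSx, hxj i h, htn]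
        linear_combination -hquad
  rw [lam1]
  exact le_antisymm (csSup_le ⟨μ, hmem⟩ hub) (le_csSup ⟨μ, hub⟩ hmem)
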